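/- If G is a graph with Δ(G) ≥ 2k−1, then G is not proportionally k-choosable; equivalently, χ_pc(G) > (Δ(G)+1)/2 for every graph G. -/

import Mathlib

open Finset

/-- The multiplicity of a color `c` in a list assignment `L`: the number of
vertices whose list contains `c`. -/
def eta {V : Type*} [Fintype V] (L : V → Finset ℕ) (c : ℕ) : ℕ :=
  (Finset.univ.filter fun v => c ∈ L v).card

/-- `f` is a proportional `L`-coloring of `G` (with lists of size `k`): a proper
`L`-coloring in which each color `c` of the palette is used `⌊η(c)/k⌋` or `⌈η(c)/k⌉` times. -/
def IsProportionalColoring {V : Type*} [Fintype V] (G : SimpleGraph V) (k : ℕ)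
    (L : V → Finset ℕ) (f : V → ℕ) : Prop :=
  (∀ v, f v ∈ L v) ∧ (∀ u v, G.Adj u v → f u ≠ f v) ∧
  ∀ c, (∃ v, c ∈ L v) →
    (Finset.univ.filter fun v => f v = c).card = eta L c / k ∨
    (Finset.univ.filter fun v => f v = c).card = (eta L c + k - 1) / k

/-- `G` is proportionally `k`-choosable: every `k`-assignment admits a proportional coloring. -/
def ProportionallyChoosable {V : Type*} [Fintype V] (G : SimpleGraph V) (k : ℕ) : Prop :=
  ∀ L : V → Finset ℕ, (∀ v, (L v).card = k) → ∃ f : V → ℕ, IsProportionalColoring G k L f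

theorem stmt_10 {V : Type*} [Fintype V] (G : SimpleGraph V) [DecidableRel G.Adj]
    (k : ℕ) (hk : 0 < k) (hΔ : 2 * k - 1 ≤ G.maxDegree) :
    ¬ ProportionallyChoosable G k := by
  classical
  intro hP
  have hV : Nonempty V := by
    by_contra h
    rw [not_nonempty_iff] at h
    have : G.maxDegree = 0 := by
      simp [SimpleGraph.maxDegree, Finset.univ_eq_empty]
    omega
  obtain ⟨v, hv⟩ := G.exists_maximal_degree_vertex
  set L : V → Finset ℕ := fun u =>
    if G.Adj v u ∨ u = v then Finset.range k else (Finset.range k).image (· + k) with hL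
  have hcard : ∀ u, (L u).card = k := by
    intro u
    simp only [hL]
    split
    · simp
    · rw [Finset.card_image_of_injective _ (add_left_injective _)]; simp
  obtain ⟨f, hf1, hf2, hf3⟩ := hP L hcard
  have hfv : f v ∈ Finset.range k := by
    have := hf1 v
    simpa [hL] using this
  have hc0 : f v < k := Finset.mem_range.mp hfv
  have hone : (Finset.univ.filter fun u => f u = f v).card = 1 := by
    have hset : (Finset.univ.filter fun u => f u = f v) = {v} := by
      ext u
      simp only [Finset.mem_filter, Finset.mem_univ, true_and, Finset.mem_singleton]
      constructor
      · intro hu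
        by_contra hne
        by_cases hadj : G.Adj v u
        · exact hf2 v u hadj hu.symm
        · have hmem : f u ∈ L u := hf1 u
          rw [hL] at hmem
          simp only [hadj, hne, or_self, if_false, Finset.mem_image,
            Finset.mem_range] at hmem
          obtain ⟨a, _, ha⟩ := hmem
          omega
      · rintro rfl; rfl
    rw [hset, Finset.card_singleton]
  have heta : 2 * k ≤ eta L (f v) := by
    have hsub : G.neighborFinset v ∪ {v} ⊆ Finset.univ.filter fun u => f v ∈ L u := by
      intro u hu
      simp only [Finset.mem_union, SimpleGraph.mem_neighborFinset,
        Finset.mem_singleton] at hu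
      simp only [Finset.mem_filter, Finset.mem_univ, true_and, hL]
      rcases hu with h | rfl
      · simp [h, hfv]
      · simp [hfv]
    have hcard2 : (G.neighborFinset v ∪ {v}).card = G.degree v + 1 := by
      rw [Finset.card_union_of_disjoint, SimpleGraph.card_neighborFinset_eq_degree,
        Finset.card_singleton]
      simp [Finset.disjoint_singleton_right]
    have := Finset.card_le_card hsub
    unfold eta
    omega
  have hcond := hf3 (f v) ⟨v, hf1 v⟩
  have h2 : 2 ≤ eta L (f v) / k := (Nat.le_div_iff_mul_le hk).mpr heta
  have h3 : eta L (f v) / k ≤ (eta L (f v) + k - 1) / k :=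
    Nat.div_le_div_right (by omega)
  omega
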